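/- If M is a static interpreted system (v ∼_a w if and only if L(v)_a = L(w)_a, for all agents a and worlds v, w), then the map Z sending (w,R) in M ⊙ 𝐑 to (w,(R,L(w))) in M ⊗ 𝐔(𝐑) is a collective bisimulation; hence M ⊙ 𝐑 and M ⊗ 𝐔(𝐑) are collectively bisimilar. -/
import Mathlib


namespace Stmt6

variable {A W P : Type}

/-- States of `M ⊙ 𝐑`: pairs of a world and a communication graph. -/
def UpState (W : Type) (A : Type) (CG : Set (A → A → Prop)) := W × {R // R ∈ CG}

/-- Relation of `M ⊙ 𝐑`: `(w,R) ∼̇_a (w',R')` iff `Ra = R'a` and `w ∼_{Ra} w'`. -/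
def upRel (sim : A → W → W → Prop) (CG : Set (A → A → Prop)) (a : A)
    (x y : UpState W A CG) : Prop :=
  ({b | x.2.1 b a} = {b | y.2.1 b a}) ∧ ∀ b, x.2.1 b a → sim b x.1 y.1

/-- States of `M ⊗ 𝐔(𝐑)`: pairs `(v,(R,Q))` such that `v` satisfies the
precondition `δ_Q` of action `(R,Q)`, i.e. `L v = Q`. -/
def ExState (W : Type) (A : Type) (P : Type) (L : W → Set P)
    (CG : Set (A → A → Prop)) :=
  {x : W × ({R // R ∈ CG} × Set P) // L x.1 = x.2.2}

/-- Relation of `M ⊗ 𝐔(𝐑)`: `(v,(R,Q)) ∼_a (v',(R',Q'))` iff `v ∼_a v'`,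
`Ra = R'a` and `Q_{Ra} = Q'_{R'a}`. -/
def exRel (sim : A → W → W → Prop) (owner : P → A) (L : W → Set P)
    (CG : Set (A → A → Prop)) (a : A) (x y : ExState W A P L CG) : Prop :=
  sim a x.1.1 y.1.1 ∧
  ({b | x.1.2.1.1 b a} = {b | y.1.2.1.1 b a}) ∧
  {p ∈ x.1.2.2 | x.1.2.1.1 (owner p) a} = {p ∈ y.1.2.2 | y.1.2.1.1 (owner p) a}

/-- The map `Z : (w,R) ↦ (w,(R,L(w)))`. -/
def Zmap (L : W → Set P) (CG : Set (A → A → Prop)) (x : UpState W A CG) :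
    ExState W A P L CG := ⟨(x.1, (x.2, L x.1)), rfl⟩

/-- If `M` is a static interpreted system (`v ∼_a w` iff `L(v)_a = L(w)_a`), then
`Z : (w,R) ↦ (w,(R,L(w)))` is a collective bisimulation between `M ⊙ 𝐑` and
`M ⊗ 𝐔(𝐑)` (atoms, forth, and back for all nonempty groups `B ⊆ A`); hence the
two models are collectively bisimilar. -/
theorem induced_action_model_bisimulation (owner : P → A)
    (sim : A → W → W → Prop) (L : W → Set P)
    (hsim : ∀ a, Equivalence (sim a))
    (CG : Set (A → A → Prop)) (hrefl : ∀ R ∈ CG, ∀ b, R b b)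
    (his : ∀ a v w, sim a v w ↔ ∀ p, owner p = a → (p ∈ L v ↔ p ∈ L w)) :
    -- atoms
    (∀ x : UpState W A CG, L x.1 = L (Zmap L CG x).1.1) ∧
    -- forth
    (∀ B : Set A, B.Nonempty → ∀ x y : UpState W A CG,
      (∀ a ∈ B, upRel sim CG a x y) →
      (∀ a ∈ B, exRel sim owner L CG a (Zmap L CG x) (Zmap L CG y))) ∧
    -- back
    (∀ B : Set A, B.Nonempty → ∀ (x : UpState W A CG) (z : ExState W A P L CG),
      (∀ a ∈ B, exRel sim owner L CG a (Zmap L CG x) z) →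
      ∃ y : UpState W A CG, (∀ a ∈ B, upRel sim CG a x y) ∧ z = Zmap L CG y) := by
  refine ⟨fun x => rfl, ?_, ?_⟩
  · intro B hB x y h a ha
    obtain ⟨hR, hs⟩ := h a ha
    have hRb : ∀ b, x.2.1 b a ↔ y.2.1 b a := fun b => Set.ext_iff.mp hR b
    refine ⟨hs a (hrefl x.2.1 x.2.2 a), hR, ?_⟩
    ext p
    simp only [Set.mem_setOf_eq]
    constructor
    · rintro ⟨hp, hr⟩
      exact ⟨((his (owner p) x.1 y.1).mp (hs (owner p) hr) p rfl).mp hp,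
        (hRb (owner p)).mp hr⟩
    · rintro ⟨hp, hr⟩
      have hr' : x.2.1 (owner p) a := (hRb (owner p)).mpr hr
      exact ⟨((his (owner p) x.1 y.1).mp (hs (owner p) hr') p rfl).mpr hp, hr'⟩
  · intro B hB x z h
    obtain ⟨⟨v, R, Q⟩, hL⟩ := z
    have hLvQ : L v = Q := hL
    refine ⟨(v, R), ?_, Subtype.ext (by simp [Zmap, hLvQ])⟩
    intro a ha
    obtain ⟨hsa, hRa, hQa⟩ := h a ha
    have hRb : ∀ b, x.2.1 b a ↔ R.1 b a := fun b => Set.ext_iff.mp hRa b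
    refine ⟨hRa, ?_⟩
    intro b hb
    rw [his]
    intro p hp
    rw [hLvQ]
    have h2 := Set.ext_iff.mp hQa p
    simp only [Set.mem_setOf_eq] at h2
    constructor
    · intro h'
      exact (h2.mp ⟨h', hp ▸ hb⟩).1
    · intro h'
      exact (h2.mpr ⟨h', hp ▸ (hRb b).mp hb⟩).1

end Stmt6
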